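/- The functions x ↦ cos(x²) and x ↦ sin(x²) are improperly Riemann integrable on [0,∞), each with integral (1/2)·√(π/2). -/

import Mathlib

open MeasureTheory Filter Real

open Complex intervalIntegral



lemma fresnel_value : (((π:ℂ) * I) ^ (1/2 : ℂ) / 2).re = (1/2) * Real.sqrt (π / 2) ∧
    (((π:ℂ) * I) ^ (1/2 : ℂ) / 2).im = (1/2) * Real.sqrt (π / 2) := by
  have hπ : (0:ℝ) < π := Real.pi_pos
  have hne : (π:ℂ) * I ≠ 0 := by simp [Complex.ext_iff, hπ.ne']
  rw [Complex.cpow_def_of_ne_zero hne]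
  have hlog : Complex.log ((π:ℂ) * I) = (Real.log π : ℂ) + (π/2 : ℝ) * I := by
    rw [Complex.log]
    have habs : ‖((π:ℂ) * I)‖ = π := by simp [abs_of_pos hπ]
    have harg : Complex.arg ((π:ℂ) * I) = π / 2 := by
      rw [Complex.arg_real_mul I hπ, Complex.arg_I]
    rw [habs, harg]
  rw [hlog]
  have h2 : ((Real.log π : ℂ) + (π/2 : ℝ) * I) * (1/2 : ℂ)
      = (Real.log π / 2 : ℝ) + (π/4 : ℝ) * I := by push_cast; ring
  rw [h2, Complex.exp_add, ← Complex.ofReal_exp, Real.exp_half, Real.exp_log hπ]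
  have hcos : Real.cos (π/4) = Real.sqrt 2 / 2 := Real.cos_pi_div_four
  have hsin : Real.sin (π/4) = Real.sqrt 2 / 2 := Real.sin_pi_div_four
  have hs2 : Real.sqrt 2 * Real.sqrt 2 = 2 := Real.mul_self_sqrt (by norm_num)
  have key : Real.sqrt π * (Real.sqrt 2)⁻¹ = Real.sqrt (π * (1/2)) := by
    rw [← Real.sqrt_inv, ← Real.sqrt_mul hπ.le]
    norm_num
  constructor
  · simp only [Complex.div_re, Complex.mul_re, Complex.ofReal_re, Complex.ofReal_im,
      Complex.exp_ofReal_mul_I_re, Complex.exp_ofReal_mul_I_im, hcos, hsin]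
    norm_num
    field_simp
    nlinarith [Real.sqrt_nonneg π, hs2]
  · simp only [Complex.div_im, Complex.mul_im, Complex.ofReal_re, Complex.ofReal_im,
      Complex.exp_ofReal_mul_I_re, Complex.exp_ofReal_mul_I_im, hcos, hsin]
    norm_num
    field_simp
    nlinarith [Real.sqrt_nonneg π, hs2]


lemma fresnel_deriv (c : ℂ) (hc : c ≠ 0) {x : ℝ} (hx : x ≠ 0) :
    HasDerivAt (fun y : ℝ => Complex.exp (c * y^2) / (2*c*y))
      (Complex.exp (c * x^2) - Complex.exp (c * x^2) / (2*c*x^2)) x := by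
  have hF : HasDerivAt (fun z : ℂ => Complex.exp (c * z^2) / (2*c*z))
      (Complex.exp (c * (x:ℂ)^2) - Complex.exp (c * (x:ℂ)^2) / (2*c*(x:ℂ)^2)) (x:ℂ) := by
    have h1 : HasDerivAt (fun z : ℂ => Complex.exp (c * z^2))
        (Complex.exp (c * (x:ℂ)^2) * (c * (2 * (x:ℂ)^1))) (x:ℂ) :=
      ((hasDerivAt_pow 2 (x:ℂ)).const_mul c).cexp
    have h2 : HasDerivAt (fun z : ℂ => 2*c*z) (2*c) (x:ℂ) := by
      simpa using (hasDerivAt_id (x:ℂ)).const_mul (2*c)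
    have hxc : (x:ℂ) ≠ 0 := Complex.ofReal_ne_zero.2 hx
    have hden : 2*c*(x:ℂ) ≠ 0 := by
      simp [hc, hxc]
    have := h1.div h2 hden
    refine this.congr_deriv ?_
    field_simp
  have := hF.comp_ofReal
  simpa using this

lemma fresnel_tail_interval (c : ℂ) (hc : c ≠ 0) (hc1 : 1 ≤ ‖c‖) (hre : c.re ≤ 0)
    {R S : ℝ} (hR : 1 ≤ R) (hRS : R ≤ S) :
    ‖∫ x in R..S, Complex.exp (c * x^2)‖ ≤ 3/(2*R) := by
  have hR0 : 0 < R := lt_of_lt_of_le one_pos hR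
  have hS0 : 0 < S := lt_of_lt_of_le hR0 hRS
  set w : ℝ → ℂ := fun y => Complex.exp (c * y^2) / (2*c*y) with hw
  have hne : ∀ x ∈ Set.uIcc R S, x ≠ 0 := by
    intro x hx
    rw [Set.uIcc_of_le hRS] at hx
    exact (lt_of_lt_of_le hR0 hx.1).ne'
  have hderiv : ∀ x ∈ Set.uIcc R S,
      HasDerivAt w (Complex.exp (c * x^2) - Complex.exp (c * x^2) / (2*c*x^2)) x :=
    fun x hx => fresnel_deriv c hc (hne x hx)
  have hcont1 : Continuous fun x : ℝ => Complex.exp (c * x^2) := by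
    fun_prop
  have hcont2 : ContinuousOn (fun x : ℝ => Complex.exp (c * x^2) / (2*c*x^2)) (Set.uIcc R S) := by
    apply hcont1.continuousOn.div (by fun_prop)
    intro x hx
    simp only [ne_eq, mul_eq_zero]
    push_neg
    exact ⟨⟨by norm_num, hc⟩, pow_ne_zero 2 (Complex.ofReal_ne_zero.2 (hne x hx))⟩
  have hcontd : ContinuousOn (fun x : ℝ =>
      Complex.exp (c * x^2) - Complex.exp (c * x^2) / (2*c*x^2)) (Set.uIcc R S) :=
    hcont1.continuousOn.sub hcont2
  have hftc := intervalIntegral.integral_eq_sub_of_hasDerivAt hderiv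
    (hcontd.intervalIntegrable)
  have hi1 : IntervalIntegrable (fun x : ℝ => Complex.exp (c * x^2)) volume R S :=
    hcont1.intervalIntegrable R S
  have hi2 : IntervalIntegrable (fun x : ℝ => Complex.exp (c * x^2) / (2*c*x^2)) volume R S :=
    hcont2.intervalIntegrable
  rw [intervalIntegral.integral_sub hi1 hi2] at hftc
  have hsplit : ∫ x in R..S, Complex.exp (c * x^2)
      = (w S - w R) + ∫ x in R..S, Complex.exp (c * x^2) / (2*c*x^2) := by
    rw [← hftc]; ring
  -- norm of exp ≤ 1
  have hexp : ∀ x : ℝ, ‖Complex.exp (c * x^2)‖ ≤ 1 := by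
    intro x
    rw [Complex.norm_exp]
    have hrr : (c * (x:ℂ)^2).re = c.re * x^2 := by
      simp [Complex.mul_re, ← Complex.ofReal_pow]
    rw [hrr]
    have : c.re * x^2 ≤ 0 := mul_nonpos_of_nonpos_of_nonneg hre (sq_nonneg x)
    calc Real.exp (c.re * x^2) ≤ Real.exp 0 := Real.exp_le_exp.2 this
    _ = 1 := Real.exp_zero
  have hwb : ∀ x : ℝ, 0 < x → ‖w x‖ ≤ 1/(2*x) := by
    intro x hx
    rw [hw]
    simp only [norm_div]
    have hden : 2 * x ≤ ‖2*c*(x:ℂ)‖ := by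
      rw [norm_mul, norm_mul]
      simp only [Complex.norm_ofNat, Complex.norm_real, Real.norm_eq_abs, abs_of_pos hx]
      nlinarith
    exact div_le_div₀ zero_le_one (hexp x) (by positivity) hden
  have hJ : ∫ x in R..S, (x:ℝ)^(-2:ℤ) = R⁻¹ - S⁻¹ := by
    rw [integral_zpow (Or.inr ⟨by norm_num, fun h => hne 0 h rfl⟩)]
    norm_num
    ring
  have hbound2 : ‖∫ x in R..S, Complex.exp (c * x^2) / (2*c*x^2)‖
      ≤ 1/(2*R) := by
    have h1 : ‖∫ x in R..S, Complex.exp (c * x^2) / (2*c*x^2)‖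
        ≤ |∫ x in R..S, (1/2 : ℝ) * x^(-2:ℤ)| := by
      apply intervalIntegral.norm_integral_le_abs_of_norm_le
      · filter_upwards [MeasureTheory.ae_restrict_mem measurableSet_uIoc] with t ht
        rw [Set.uIoc_of_le hRS] at ht
        have ht0 : 0 < t := lt_of_lt_of_le hR0 ht.1.le
        rw [norm_div]
        have hden : 2 * t^2 ≤ ‖2*c*((t:ℂ))^2‖ := by
          rw [norm_mul, norm_mul, ← Complex.ofReal_pow]
          simp only [Complex.norm_ofNat, Complex.norm_real, Real.norm_eq_abs,
            abs_of_pos (by positivity : (0:ℝ) < t^2)]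
          nlinarith
        calc ‖Complex.exp (c * t^2)‖ / ‖2*c*((t:ℂ))^2‖ ≤ 1 / (2*t^2) :=
              div_le_div₀ zero_le_one (hexp t) (by positivity) hden
        _ = (1/2) * t^(-2:ℤ) := by
              rw [zpow_neg]
              field_simp
      · apply ContinuousOn.intervalIntegrable
        apply ContinuousOn.mul continuousOn_const
        apply ContinuousOn.zpow₀ continuousOn_id
        intro x hx; exact Or.inl (hne x hx)
    rw [intervalIntegral.integral_const_mul, hJ] at h1
    have : |1/2 * (R⁻¹ - S⁻¹)| ≤ 1/(2*R) := by
      rw [_root_.abs_of_nonneg (by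
        have : S⁻¹ ≤ R⁻¹ := inv_anti₀ hR0 hRS
        nlinarith)]
      have hS : 0 < S⁻¹ := by positivity
      have h2 : (1:ℝ)/(2*R) = 2⁻¹ * R⁻¹ := by rw [one_div, mul_inv]
      rw [h2]
      nlinarith
    linarith
  rw [hsplit]
  have hwS := hwb S hS0
  have hwR := hwb R hR0
  have h2S : 1/(2*S) ≤ 1/(2*R) := by
    apply div_le_div_of_nonneg_left one_pos.le (by positivity)
    · linarith
  calc ‖(w S - w R) + ∫ x in R..S, Complex.exp (c * x^2) / (2*c*x^2)‖
      ≤ ‖w S - w R‖ + ‖∫ x in R..S, Complex.exp (c * x^2) / (2*c*x^2)‖ := norm_add_le _ _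
  _ ≤ (‖w S‖ + ‖w R‖) + 1/(2*R) := add_le_add (norm_sub_le _ _) hbound2
  _ ≤ (1/(2*R) + 1/(2*R)) + 1/(2*R) := by
      apply add_le_add_left (add_le_add (le_trans hwS h2S) hwR)
  _ = 3/(2*R) := by ring

lemma fresnel_integrable {ε : ℝ} (hε : 0 < ε) :
    MeasureTheory.Integrable (fun x : ℝ => Complex.exp ((I - ε) * x^2)) := by
  have h := integrable_cexp_neg_mul_sq (b := (ε : ℂ) - I) (by simp [hε])
  convert h using 2 with x
  ring_nf

lemma fresnel_tail {ε R : ℝ} (hε : 0 < ε) (hR : 1 ≤ R) :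
    ‖∫ x in Set.Ioi R, Complex.exp ((I - ε) * x^2)‖ ≤ 3/(2*R) := by
  set c : ℂ := I - ε with hcdef
  have hc : c ≠ 0 := by
    simp [hcdef, Complex.ext_iff]
  have hc1 : 1 ≤ ‖c‖ := by
    have := Complex.abs_im_le_norm c
    have him : c.im = 1 := by simp [hcdef]
    rw [him] at this
    simpa using this
  have hre : c.re ≤ 0 := by simp [hcdef, hε.le]
  have hIoi : MeasureTheory.IntegrableOn (fun x : ℝ => Complex.exp (c * x^2)) (Set.Ioi R) :=
    (fresnel_integrable hε).integrableOn
  have htend := intervalIntegral_tendsto_integral_Ioi R hIoi tendsto_id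
  have := (continuous_norm.tendsto _).comp htend
  apply le_of_tendsto this
  filter_upwards [eventually_ge_atTop R] with S hS
  exact fresnel_tail_interval c hc hc1 hre hR hS

lemma fresnel_middle {ε R : ℝ} (hε : 0 ≤ ε) (hR : 0 ≤ R) :
    ‖(∫ x in (0:ℝ)..R, Complex.exp (I * x^2))
      - ∫ x in (0:ℝ)..R, Complex.exp ((I - ε) * x^2)‖ ≤ ε * R^3 / 3 := by
  have hi1 : IntervalIntegrable (fun x : ℝ => Complex.exp (I * x^2)) volume 0 R :=
    (Continuous.intervalIntegrable (by fun_prop) 0 R)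
  have hi2 : IntervalIntegrable (fun x : ℝ => Complex.exp ((I - ε) * x^2)) volume 0 R :=
    (Continuous.intervalIntegrable (by fun_prop) 0 R)
  rw [← intervalIntegral.integral_sub hi1 hi2]
  have hb : ‖∫ x in (0:ℝ)..R, (Complex.exp (I * x^2) - Complex.exp ((I - ε) * x^2))‖
      ≤ |∫ x in (0:ℝ)..R, ε * x^2| := by
    apply intervalIntegral.norm_integral_le_abs_of_norm_le
    · filter_upwards [MeasureTheory.ae_restrict_mem measurableSet_uIoc] with t ht
      have hfac : Complex.exp (I * t^2) - Complex.exp ((I - ε) * t^2)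
          = Complex.exp (I * t^2) * (1 - Complex.exp (-(ε : ℂ) * t^2)) := by
        rw [mul_sub, mul_one, ← Complex.exp_add]
        ring_nf
      rw [hfac, norm_mul]
      have h1 : ‖Complex.exp (I * t^2)‖ = 1 := by
        rw [Complex.norm_exp]
        simp [Complex.mul_re, ← Complex.ofReal_pow]
      rw [h1, one_mul]
      have h2 : (-(ε : ℂ) * (t:ℂ)^2) = ((-(ε * t^2) : ℝ) : ℂ) := by push_cast; ring
      rw [h2, ← Complex.ofReal_exp, ← Complex.ofReal_one, ← Complex.ofReal_sub,
        Complex.norm_real, Real.norm_eq_abs]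
      have het : Real.exp (-(ε * t^2)) ≤ 1 := Real.exp_le_one_iff.2 (neg_nonpos.2 (by positivity))
      rw [_root_.abs_of_nonneg (by linarith)]
      have := Real.add_one_le_exp (-(ε * t^2))
      linarith
    · exact (Continuous.intervalIntegrable (by fun_prop) 0 R)
  rw [intervalIntegral.integral_const_mul, integral_pow] at hb
  norm_num at hb
  rw [_root_.abs_of_nonneg (by positivity : (0:ℝ) ≤ R ^ 3 / 3), _root_.abs_of_nonneg hε] at hb
  linarith

lemma fresnel_gauss {ε : ℝ} (hε : 0 < ε) :
    ∫ x in Set.Ioi (0:ℝ), Complex.exp ((I - ε) * x^2)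
      = ((π : ℂ) / ((ε : ℂ) - I)) ^ (1/2 : ℂ) / 2 := by
  have h := integral_gaussian_complex_Ioi (b := (ε : ℂ) - I) (by simp [hε])
  rw [← h]
  apply MeasureTheory.setIntegral_congr_fun measurableSet_Ioi
  intro x _
  ring_nf

lemma fresnel_limit :
    Tendsto (fun ε : ℝ => ∫ x in Set.Ioi (0:ℝ), Complex.exp ((I - ε) * x^2))
      (nhdsWithin 0 (Set.Ioi 0)) (nhds (((π : ℂ) * I) ^ (1/2 : ℂ) / 2)) := by
  have hf : ContinuousAt (fun ε : ℝ => (π:ℂ)/((ε:ℂ)-I)) 0 := by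
    apply ContinuousAt.div continuousAt_const
    · exact ((Complex.continuous_ofReal.continuousAt).sub continuousAt_const)
    · simp [Complex.ext_iff]
  have hmem : ((π:ℂ) / (((0:ℝ):ℂ) - I)) ∈ Complex.slitPlane := by
    rw [Complex.mem_slitPlane_iff]
    right
    have : ((π:ℂ) / (((0:ℝ):ℂ) - I)) = (π : ℂ) * I := by
      rw [div_eq_iff (by simp [Complex.ext_iff] : ((0:ℝ):ℂ) - I ≠ 0)]
      simp [Complex.ext_iff]
    rw [this]
    simp [Real.pi_ne_zero]
  have hcont : ContinuousAt (fun ε : ℝ => ((π : ℂ) / ((ε : ℂ) - I)) ^ (1/2 : ℂ) / 2) 0 :=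
    (hf.cpow continuousAt_const hmem).div_const 2
  have hval : ((π : ℂ) / (((0:ℝ) : ℂ) - I)) ^ (1/2 : ℂ) / 2 = ((π : ℂ) * I) ^ (1/2 : ℂ) / 2 := by
    congr 2
    rw [div_eq_iff (by simp [Complex.ext_iff] : ((0:ℝ):ℂ) - I ≠ 0)]
    simp [Complex.ext_iff]
  have h1 : Tendsto (fun ε : ℝ => ((π : ℂ) / ((ε : ℂ) - I)) ^ (1/2 : ℂ) / 2)
      (nhdsWithin 0 (Set.Ioi 0)) (nhds (((π : ℂ) * I) ^ (1/2 : ℂ) / 2)) := by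
    have := hcont.continuousWithinAt (s := Set.Ioi 0)
    rw [ContinuousWithinAt] at this
    rw [← hval]
    exact this
  apply h1.congr'
  filter_upwards [self_mem_nhdsWithin] with ε hε
  exact (fresnel_gauss hε).symm

lemma fresnel_complex_tendsto :
    Tendsto (fun R : ℝ => ∫ x in (0:ℝ)..R, Complex.exp (I * x^2)) atTop
      (nhds (((π : ℂ) * I) ^ (1/2 : ℂ) / 2)) := by
  set L : ℂ := ((π : ℂ) * I) ^ (1/2 : ℂ) / 2 with hL
  set G : ℝ → ℂ := fun ε => ∫ x in Set.Ioi (0:ℝ), Complex.exp ((I - ε) * x^2) with hG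
  have hεt : Tendsto (fun R : ℝ => (R^4)⁻¹) atTop (nhdsWithin 0 (Set.Ioi 0)) := by
    rw [tendsto_nhdsWithin_iff]
    constructor
    · exact (tendsto_pow_atTop (by norm_num)).inv_tendsto_atTop
    · filter_upwards [eventually_ge_atTop (1:ℝ)] with R hR
      have : (0:ℝ) < R := lt_of_lt_of_le one_pos hR
      exact Set.mem_Ioi.2 (by positivity)
  have hcomp : Tendsto (fun R : ℝ => G ((R^4)⁻¹)) atTop (nhds L) :=
    fresnel_limit.comp hεt
  have hsplit : ∀ {ε R : ℝ}, 0 < ε → 0 ≤ R →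
      G ε = (∫ x in (0:ℝ)..R, Complex.exp ((I - ε) * x^2))
        + ∫ x in Set.Ioi R, Complex.exp ((I - ε) * x^2) := by
    intro ε R hε hR
    have hint := fresnel_integrable hε
    have h := MeasureTheory.setIntegral_union (s := Set.Ioc (0:ℝ) R) (t := Set.Ioi R)
      (Set.Ioc_disjoint_Ioi le_rfl)
      measurableSet_Ioi hint.integrableOn hint.integrableOn
    rw [Set.Ioc_union_Ioi_eq_Ioi hR] at h
    simp only [hG]
    rw [h, intervalIntegral.integral_of_le hR]
  have hdiff : ∀ᶠ R : ℝ in atTop,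
      ‖(∫ x in (0:ℝ)..R, Complex.exp (I * x^2)) - G ((R^4)⁻¹)‖ ≤ 2 / R := by
    filter_upwards [eventually_ge_atTop (1:ℝ)] with R hR
    have hR0 : (0:ℝ) < R := lt_of_lt_of_le one_pos hR
    have hε : (0:ℝ) < (R^4)⁻¹ := by positivity
    rw [hsplit hε hR0.le]
    have h1 := fresnel_middle (ε := (R^4)⁻¹) hε.le hR0.le
    have h2 := fresnel_tail (ε := (R^4)⁻¹) hε hR
    calc ‖(∫ x in (0:ℝ)..R, Complex.exp (I * x^2))
          - ((∫ x in (0:ℝ)..R, Complex.exp ((I - ((R^4)⁻¹:ℝ)) * x^2))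
            + ∫ x in Set.Ioi R, Complex.exp ((I - ((R^4)⁻¹:ℝ)) * x^2))‖
        ≤ ‖(∫ x in (0:ℝ)..R, Complex.exp (I * x^2))
          - (∫ x in (0:ℝ)..R, Complex.exp ((I - ((R^4)⁻¹:ℝ)) * x^2))‖
          + ‖∫ x in Set.Ioi R, Complex.exp ((I - ((R^4)⁻¹:ℝ)) * x^2)‖ := by
          rw [sub_add_eq_sub_sub]
          exact norm_sub_le _ _
      _ ≤ (R^4)⁻¹ * R^3 / 3 + 3/(2*R) := add_le_add h1 h2
      _ ≤ 2 / R := by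
          have h3 : (R^4)⁻¹ * R^3 = R⁻¹ := by
            field_simp
          rw [h3]
          have h6 : 2/R - (R⁻¹/3 + 3/(2*R)) = 1/(6*R) := by field_simp; ring
          have h7 : (0:ℝ) < 1/(6*R) := by positivity
          linarith
  have hzero : Tendsto (fun R : ℝ =>
      (∫ x in (0:ℝ)..R, Complex.exp (I * x^2)) - G ((R^4)⁻¹)) atTop (nhds 0) := by
    apply squeeze_zero_norm' hdiff
    have h2 : Tendsto (fun R : ℝ => 2 * R⁻¹) atTop (nhds (2 * 0)) :=
      tendsto_inv_atTop_zero.const_mul 2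
    rw [mul_zero] at h2
    exact h2.congr (fun R => (div_eq_mul_inv 2 R).symm)
  have hfin := hzero.add hcomp
  rw [zero_add] at hfin
  exact hfin.congr (fun R => by ring)

/-- The classical Fresnel integrals: `x ↦ cos(x²)` and `x ↦ sin(x²)` are improperly
Riemann integrable on `[0,∞)`, each with integral `(1/2)·√(π/2)`. -/
theorem fresnel_cos_sin_integrals :
    Tendsto (fun R : ℝ => ∫ x in (0 : ℝ)..R, Real.cos (x ^ 2)) atTop
      (nhds ((1 / 2) * Real.sqrt (Real.pi / 2))) ∧
    Tendsto (fun R : ℝ => ∫ x in (0 : ℝ)..R, Real.sin (x ^ 2)) atTop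
      (nhds ((1 / 2) * Real.sqrt (Real.pi / 2))) := by
  have hint : ∀ R : ℝ, IntervalIntegrable (fun x : ℝ => Complex.exp (I * x^2)) volume 0 R :=
    fun R => Continuous.intervalIntegrable (by fun_prop) 0 R
  have hre : ∀ R : ℝ, ∫ x in (0:ℝ)..R, Real.cos (x ^ 2)
      = (∫ x in (0:ℝ)..R, Complex.exp (I * x^2)).re := by
    intro R
    rw [show ((∫ x in (0:ℝ)..R, Complex.exp (I * x^2)).re)
        = Complex.reCLM (∫ x in (0:ℝ)..R, Complex.exp (I * x^2)) from rfl,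
      ← Complex.reCLM.intervalIntegral_comp_comm (hint R)]
    apply intervalIntegral.integral_congr
    intro x _
    simp only [Complex.reCLM_apply]
    rw [mul_comm, ← Complex.ofReal_pow, Complex.exp_ofReal_mul_I_re]
  have him : ∀ R : ℝ, ∫ x in (0:ℝ)..R, Real.sin (x ^ 2)
      = (∫ x in (0:ℝ)..R, Complex.exp (I * x^2)).im := by
    intro R
    rw [show ((∫ x in (0:ℝ)..R, Complex.exp (I * x^2)).im)
        = Complex.imCLM (∫ x in (0:ℝ)..R, Complex.exp (I * x^2)) from rfl,
      ← Complex.imCLM.intervalIntegral_comp_comm (hint R)]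
    apply intervalIntegral.integral_congr
    intro x _
    simp only [Complex.imCLM_apply]
    rw [mul_comm, ← Complex.ofReal_pow, Complex.exp_ofReal_mul_I_im]
  constructor
  · have h := (Complex.continuous_re.tendsto _).comp fresnel_complex_tendsto
    rw [fresnel_value.1] at h
    exact h.congr (fun R => (hre R).symm)
  · have h := (Complex.continuous_im.tendsto _).comp fresnel_complex_tendsto
    rw [fresnel_value.2] at h
    exact h.congr (fun R => (him R).symm)
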